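/- arXiv:2605.21549 — 9 statements merged into one kernel-verified Lean document; each statement's English description precedes it below -/
import Mathlib

section
/- Let (X, ρ) be a complete metric space and let ψ : X → X be a mapping that is k-continuous for some k ∈ ℕ (i.e. the k-th iterate ψ^k is continuous) and satisfies ρ(ψ²x, ψ²y) ≤ α(ρ(x, ψy) + ρ(y, ψx)) for all x, y ∈ X, for some constant α ∈ [0, 1/2). Then ψ has a unique fixed point x* in X, and for every initial point x ∈ X the iterative sequence (ψⁿx) converges to x*. -/
/-- **Theorem 2.3.** If `(X, ρ)` is a complete metric space and `ψ : X → X` is a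
`k`-continuous mapping (i.e. `ψ^[k]` is continuous) for some `k ∈ ℕ` satisfying
`ρ(ψ²x, ψ²y) ≤ α (ρ(x, ψy) + ρ(y, ψx))` for all `x, y ∈ X` with `α ∈ [0, 1/2)`,
then `ψ` has a unique fixed point and every iterative sequence `(ψⁿ x)` converges to it. -/
theorem stmt_0 {X : Type*} [MetricSpace X] [CompleteSpace X] [Nonempty X]
    (ψ : X → X) (k : ℕ) (hk : 1 ≤ k) (hψk : Continuous (ψ^[k]))
    (α : ℝ) (hα0 : 0 ≤ α) (hα : α < 1 / 2)
    (hcontr : ∀ x y : X, dist (ψ (ψ x)) (ψ (ψ y)) ≤ α * (dist x (ψ y) + dist y (ψ x))) :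
    ∃ xs : X, ψ xs = xs ∧ (∀ y : X, ψ y = y → y = xs) ∧
      ∀ x : X, Filter.Tendsto (fun n => ψ^[n] x) Filter.atTop (nhds xs) := by
  set β : ℝ := max (2 * α) (1 / 2) with hβdef
  have hβ1 : β < 1 := max_lt (by linarith) (by norm_num)
  have hβ0 : (0 : ℝ) < β := lt_of_lt_of_le (by norm_num) (le_max_right _ _)
  have h2α : 2 * α ≤ β := le_max_left _ _
  -- the basic recurrence
  have hrec : ∀ (z : X) (n : ℕ), dist (ψ^[n+2] z) (ψ^[n+3] z) ≤
      α * (dist (ψ^[n] z) (ψ^[n+1] z) + dist (ψ^[n+1] z) (ψ^[n+2] z)) := by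
    intro z n
    have e2 : ∀ m : ℕ, ψ^[m+2] z = ψ (ψ (ψ^[m] z)) := by
      intro m
      rw [Function.iterate_succ_apply', Function.iterate_succ_apply']
    have e1 : ∀ m : ℕ, ψ^[m+1] z = ψ (ψ^[m] z) := by
      intro m; rw [Function.iterate_succ_apply']
    have h := hcontr (ψ^[n] z) (ψ^[n+1] z)
    rw [← e2 n, ← e2 (n+1), ← e1 (n+1), ← e1 n] at h
    have htri : dist (ψ^[n] z) (ψ^[n+2] z) ≤
        dist (ψ^[n] z) (ψ^[n+1] z) + dist (ψ^[n+1] z) (ψ^[n+2] z) := dist_triangle _ _ _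
    have hself : dist (ψ^[n+1] z) (ψ^[n+1] z) = 0 := dist_self _
    have : (n+1)+2 = n+3 := rfl
    rw [this] at h
    nlinarith [h, htri, hself]
  -- the geometric bound
  have hbound : ∀ (z : X) (n : ℕ), dist (ψ^[n] z) (ψ^[n+1] z) ≤
      max (dist z (ψ z)) (dist (ψ z) (ψ (ψ z))) * β ^ (n / 2) := by
    intro z n
    set M : ℝ := max (dist z (ψ z)) (dist (ψ z) (ψ (ψ z))) with hMdef
    have hM0 : 0 ≤ M := le_trans dist_nonneg (le_max_left _ _)
    induction n using Nat.strong_induction_on with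
    | _ n ih =>
      match n with
      | 0 =>
        simp only [Nat.zero_div, pow_zero, mul_one, Function.iterate_zero_apply,
          Function.iterate_one, zero_add]
        exact le_max_left _ _
      | 1 =>
        have h12 : (1:ℕ)/2 = 0 := rfl
        simp only [h12, pow_zero, mul_one, Function.iterate_one,
          Function.iterate_succ_apply', Function.iterate_zero_apply]
        exact le_max_right _ _
      | (m+2) =>
        have h1 := ih m (by omega)
        have h2 := ih (m+1) (by omega)
        have hr := hrec z m
        have hmono : β ^ ((m+1) / 2) ≤ β ^ (m / 2) :=
          pow_le_pow_of_le_one hβ0.le hβ1.le (Nat.div_le_div_right (by omega))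
        have h2' : dist (ψ^[m+1] z) (ψ^[m+2] z) ≤ M * β ^ (m / 2) :=
          le_trans h2 (by nlinarith)
        have hdiv : (m+2) / 2 = m / 2 + 1 := by omega
        rw [hdiv, pow_succ]
        have hp0 : (0:ℝ) ≤ β ^ (m / 2) := pow_nonneg hβ0.le _
        nlinarith [hr, h1, h2', mul_nonneg hM0 hp0]
  -- β^(n/2) → 0 along any exponent sequence going to infinity
  have hpow0 : Filter.Tendsto (fun n : ℕ => β ^ n) Filter.atTop (nhds 0) :=
    tendsto_pow_atTop_nhds_zero_of_lt_one hβ0.le hβ1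
  -- every orbit converges to a fixed point of ψ
  have conv : ∀ x : X, ∃ v : X, ψ v = v ∧
      Filter.Tendsto (fun n => ψ^[n] x) Filter.atTop (nhds v) := by
    intro x
    set M : ℝ := max (dist x (ψ x)) (dist (ψ x) (ψ (ψ x))) with hMdef
    have hM0 : 0 ≤ M := le_trans dist_nonneg (le_max_left _ _)
    set γ : ℝ := Real.sqrt β with hγdef
    have hγ0 : 0 < γ := Real.sqrt_pos.mpr hβ0
    have hsq : γ ^ 2 = β := Real.sq_sqrt hβ0.le
    have hγ1 : γ < 1 := by nlinarith [hγ0.le]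
    have hd : ∀ n : ℕ, dist (ψ^[n] x) (ψ^[n+1] x) ≤ (M / γ) * γ ^ n := by
      intro n
      have h1 := hbound x n
      have h2 : β ^ (n / 2) = γ ^ (2 * (n / 2)) := by rw [pow_mul, hsq]
      have h3 : γ ^ (2 * (n / 2) + 1) ≤ γ ^ n :=
        pow_le_pow_of_le_one hγ0.le hγ1.le (by omega)
      have h4 : (M / γ) * γ ^ (2 * (n / 2) + 1) = M * γ ^ (2 * (n / 2)) := by
        rw [pow_succ]; field_simp
      calc dist (ψ^[n] x) (ψ^[n+1] x) ≤ M * β ^ (n / 2) := h1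
        _ = (M / γ) * γ ^ (2 * (n / 2) + 1) := by rw [h2, h4]
        _ ≤ (M / γ) * γ ^ n := by
            exact mul_le_mul_of_nonneg_left h3 (div_nonneg hM0 hγ0.le)
    have hsum : Summable (fun n : ℕ => (M / γ) * γ ^ n) :=
      (summable_geometric_of_lt_one hγ0.le hγ1).mul_left _
    have hcauchy : CauchySeq (fun n => ψ^[n] x) :=
      cauchySeq_of_dist_le_of_summable _ hd hsum
    obtain ⟨v, hv⟩ := cauchySeq_tendsto_of_complete hcauchy
    -- v is a fixed point of ψ^[k]
    have h2 : Filter.Tendsto (fun n => ψ^[k] (ψ^[n] x)) Filter.atTop (nhds (ψ^[k] v)) :=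
      (hψk.tendsto v).comp hv
    have h1 : Filter.Tendsto (fun n => ψ^[k] (ψ^[n] x)) Filter.atTop (nhds v) := by
      have := hv.comp (Filter.tendsto_add_atTop_nat k)
      simpa [Function.comp_def, ← Function.iterate_add_apply, Nat.add_comm] using this
    have hkfix : ψ^[k] v = v := tendsto_nhds_unique h2 h1
    -- v is a fixed point of ψ
    have hmult : ∀ m : ℕ, ψ^[k * m] v = v := by
      intro m
      rw [Function.iterate_mul]
      exact Function.iterate_fixed hkfix m
    set Mv : ℝ := max (dist v (ψ v)) (dist (ψ v) (ψ (ψ v))) with hMvdef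
    have hconst : ∀ m : ℕ, dist v (ψ v) ≤ Mv * β ^ ((k * m) / 2) := by
      intro m
      have h := hbound v (k * m)
      have e1 : ψ^[k*m] v = v := hmult m
      have e2 : ψ^[k*m+1] v = ψ v := by rw [Function.iterate_succ_apply', e1]
      rw [e1, e2] at h
      exact h
    have hexp : Filter.Tendsto (fun m : ℕ => (k * m) / 2) Filter.atTop Filter.atTop := by
      apply Filter.tendsto_atTop_atTop.mpr
      intro b
      refine ⟨2 * b, fun m hm => ?_⟩
      have h1 : m ≤ k * m := Nat.le_mul_of_pos_left m hk
      omega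
    have htend0 : Filter.Tendsto (fun m : ℕ => Mv * β ^ ((k * m) / 2)) Filter.atTop (nhds 0) := by
      have := (hpow0.comp hexp).const_mul Mv
      simpa using this
    have hdle : dist v (ψ v) ≤ 0 :=
      le_of_tendsto_of_tendsto' tendsto_const_nhds htend0 hconst
    have hvfix : ψ v = v := (dist_le_zero.mp hdle).symm
    exact ⟨v, hvfix, hv⟩
  obtain ⟨xs, hxs, hxstend⟩ := conv (Classical.arbitrary X)
  have huniq : ∀ y : X, ψ y = y → y = xs := by
    intro y hy
    have h := hcontr y xs
    rw [hy, hy, hxs, hxs] at h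
    have hc : dist xs y = dist y xs := dist_comm _ _
    have h0 : (0:ℝ) ≤ dist y xs := dist_nonneg
    have : dist y xs ≤ 0 := by nlinarith
    exact dist_le_zero.mp this
  refine ⟨xs, hxs, huniq, fun x => ?_⟩
  obtain ⟨v, hvfix, hvtend⟩ := conv x
  rwa [huniq v hvfix] at hvtend
end

section
/- Let (X, ρ) be a complete metric space and let ψ : X → X satisfy ρ(ψ²x, ψ²y) ≤ α(ρ(x, ψy) + ρ(y, ψx)) for all x, y ∈ X, for some α ∈ [0, 1/2). Then the set of fixed points of ψ coincides with the set of fixed points of ψ²; in particular, any point z with ψ²z = z satisfies ψz = z. -/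
/-- **Remark 2.4.** For a mapping `ψ` on a complete metric space satisfying the
2-Chatterjea condition, the fixed points of `ψ` coincide with the fixed points of `ψ²`;
in particular, `ψ² z = z` implies `ψ z = z`. -/
theorem stmt_1 {X : Type*} [MetricSpace X] [CompleteSpace X]
    (ψ : X → X) (α : ℝ) (hα0 : 0 ≤ α) (hα : α < 1 / 2)
    (hcontr : ∀ x y : X, dist (ψ (ψ x)) (ψ (ψ y)) ≤ α * (dist x (ψ y) + dist y (ψ x))) :
    Function.fixedPoints ψ = Function.fixedPoints (ψ ∘ ψ) ∧
      ∀ z : X, ψ (ψ z) = z → ψ z = z := by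
  have key : ∀ z : X, ψ (ψ z) = z → ψ z = z := by
    intro z hz
    have h := hcontr z (ψ z)
    rw [hz] at h
    simp only [hz, dist_self] at h
    have h0 : dist z (ψ z) ≤ 0 := by linarith
    have : dist z (ψ z) = 0 := le_antisymm h0 dist_nonneg
    exact (dist_eq_zero.mp this).symm
  refine ⟨?_, key⟩
  ext x
  simp only [Function.mem_fixedPoints, Function.IsFixedPt, Function.comp_apply]
  constructor
  · intro h; rw [h, h]
  · exact key x
end

section
/- Let (X, ρ) be a complete metric space and let ψ : X → X satisfy ρ(ψ²x, ψ²y) ≤ α(ρ(x, ψy) + ρ(y, ψx)) for all x, y ∈ X, for some α ∈ [0, 1/2) (no continuity assumption). Then there exists a point x* ∈ X such that for every initial point x ∈ X the iterative sequence (ψⁿx) converges to x*, and every fixed point of ψ equals x* (i.e. Fix(ψ) ⊆ {x*}). -/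
/-- **Corollary 2.8.** If `ψ` satisfies the 2-Chatterjea condition on a complete metric
space (no continuity assumption), then all iterative sequences `(ψⁿ x)` converge to one
and the same point `x*`, and `Fix(ψ) ⊆ {x*}`. -/
theorem stmt_2 {X : Type*} [MetricSpace X] [CompleteSpace X] [Nonempty X]
    (ψ : X → X) (α : ℝ) (hα0 : 0 ≤ α) (hα : α < 1 / 2)
    (hcontr : ∀ x y : X, dist (ψ (ψ x)) (ψ (ψ y)) ≤ α * (dist x (ψ y) + dist y (ψ x))) :
    ∃ xs : X, (∀ x : X, Filter.Tendsto (fun n => ψ^[n] x) Filter.atTop (nhds xs)) ∧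
      ∀ y : X, ψ y = y → y = xs := by
  obtain ⟨x0⟩ := ‹Nonempty X›
  set γ : ℝ := max (Real.sqrt (2 * α)) (1 / 2) with hγdef
  have hγ0 : (0:ℝ) < γ := lt_of_lt_of_le (by norm_num) (le_max_right _ _)
  have hγ1 : γ < 1 := by
    apply max_lt _ (by norm_num)
    rw [show (1:ℝ) = Real.sqrt 1 by simp]
    exact Real.sqrt_lt_sqrt (by linarith) (by linarith)
  have hγsq : 2 * α ≤ γ ^ 2 := by
    have h1 : Real.sqrt (2 * α) ≤ γ := le_max_left _ _
    have := Real.sq_sqrt (by linarith : (0:ℝ) ≤ 2 * α)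
    nlinarith [Real.sqrt_nonneg (2 * α)]
  have hαγ : α * (1 + γ) ≤ γ ^ 2 := by nlinarith
  -- Cauchy for every starting point
  have cauchy : ∀ x : X, CauchySeq (fun n => ψ^[n] x) := by
    intro x
    set C : ℝ := max (dist x (ψ x)) (dist (ψ x) (ψ (ψ x)) / γ) with hCdef
    have hC0 : 0 ≤ C := le_trans dist_nonneg (le_max_left _ _)
    have key : ∀ n, dist (ψ^[n] x) (ψ^[n+1] x) ≤ C * γ ^ n ∧
        dist (ψ^[n+1] x) (ψ^[n+2] x) ≤ C * γ ^ (n+1) := by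
      intro n
      induction n with
      | zero =>
        constructor
        · simp only [Function.iterate_zero, Function.iterate_one, id_eq, pow_zero, mul_one,
            zero_add]
          exact le_max_left _ _
        · have h2 : dist (ψ x) (ψ (ψ x)) / γ ≤ C := le_max_right _ _
          rw [div_le_iff₀ hγ0] at h2
          simpa [Function.iterate_succ_apply', mul_comm] using h2
      | succ n ih =>
        refine ⟨ih.2, ?_⟩
        have e3 : ψ (ψ^[n] x) = ψ^[n+1] x := (Function.iterate_succ_apply' ψ n x).symm
        have e4 : ψ (ψ^[n+1] x) = ψ^[n+2] x := (Function.iterate_succ_apply' ψ (n+1) x).symm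
        have e5 : ψ (ψ^[n+2] x) = ψ^[n+3] x := (Function.iterate_succ_apply' ψ (n+2) x).symm
        have h := hcontr (ψ^[n] x) (ψ^[n+1] x)
        rw [e3, e4, e5, dist_self] at h
        have htri : dist (ψ^[n] x) (ψ^[n+2] x) ≤
            dist (ψ^[n] x) (ψ^[n+1] x) + dist (ψ^[n+1] x) (ψ^[n+2] x) := dist_triangle _ _ _
        have hbound : dist (ψ^[n+2] x) (ψ^[n+3] x) ≤
            α * (dist (ψ^[n] x) (ψ^[n+1] x) + dist (ψ^[n+1] x) (ψ^[n+2] x)) := by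
          nlinarith [mul_le_mul_of_nonneg_left htri hα0]
        have hγn : (0:ℝ) ≤ γ ^ n := pow_nonneg hγ0.le n
        calc dist (ψ^[n+2] x) (ψ^[n+3] x)
            ≤ α * (dist (ψ^[n] x) (ψ^[n+1] x) + dist (ψ^[n+1] x) (ψ^[n+2] x)) := hbound
          _ ≤ α * (C * γ ^ n + C * γ ^ (n+1)) := by
              have := ih.1; have := ih.2; nlinarith
          _ = α * (1 + γ) * (C * γ ^ n) := by ring
          _ ≤ γ ^ 2 * (C * γ ^ n) :=
              mul_le_mul_of_nonneg_right hαγ (mul_nonneg hC0 hγn)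
          _ = C * γ ^ (n+2) := by ring
    exact cauchySeq_of_le_geometric γ C hγ1 (fun n => (key n).1)
  -- any two limits of iterate sequences coincide
  have limeq : ∀ (x y : X) (p q : X),
      Filter.Tendsto (fun n => ψ^[n] x) Filter.atTop (nhds p) →
      Filter.Tendsto (fun n => ψ^[n] y) Filter.atTop (nhds q) → p = q := by
    intro x y p q hp hq
    have hshift1x : Filter.Tendsto (fun n => ψ^[n+1] x) Filter.atTop (nhds p) :=
      hp.comp (Filter.tendsto_add_atTop_nat 1)
    have hshift1y : Filter.Tendsto (fun n => ψ^[n+1] y) Filter.atTop (nhds q) :=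
      hq.comp (Filter.tendsto_add_atTop_nat 1)
    have hA : Filter.Tendsto (fun n => dist (ψ^[n+2] x) (ψ^[n+2] y)) Filter.atTop
        (nhds (dist p q)) :=
      ((hp.comp (Filter.tendsto_add_atTop_nat 2)).dist
        (hq.comp (Filter.tendsto_add_atTop_nat 2)))
    have hB : Filter.Tendsto
        (fun n => α * (dist (ψ^[n] x) (ψ^[n+1] y) + dist (ψ^[n] y) (ψ^[n+1] x)))
        Filter.atTop (nhds (α * (dist p q + dist q p))) :=
      Filter.Tendsto.const_mul α ((hp.dist hshift1y).add (hq.dist hshift1x))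
    have hle : dist p q ≤ α * (dist p q + dist q p) := by
      refine le_of_tendsto_of_tendsto' hA hB ?_
      intro n
      have e3 : ψ (ψ^[n] x) = ψ^[n+1] x := (Function.iterate_succ_apply' ψ n x).symm
      have e4 : ψ (ψ^[n] y) = ψ^[n+1] y := (Function.iterate_succ_apply' ψ n y).symm
      have e5 : ψ (ψ^[n+1] x) = ψ^[n+2] x := (Function.iterate_succ_apply' ψ (n+1) x).symm
      have e6 : ψ (ψ^[n+1] y) = ψ^[n+2] y := (Function.iterate_succ_apply' ψ (n+1) y).symm
      have h := hcontr (ψ^[n] x) (ψ^[n] y)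
      rw [e3, e4, e5, e6] at h
      exact h
    rw [dist_comm q p] at hle
    have : dist p q = 0 := by nlinarith [dist_nonneg (x := p) (y := q)]
    exact dist_eq_zero.mp this
  obtain ⟨xs, hxs⟩ := cauchySeq_tendsto_of_complete (cauchy x0)
  refine ⟨xs, ?_, ?_⟩
  · intro x
    obtain ⟨q, hq⟩ := cauchySeq_tendsto_of_complete (cauchy x)
    rwa [limeq x x0 q xs hq hxs] at hq
  · intro y hy
    have hconst : Filter.Tendsto (fun n => ψ^[n] y) Filter.atTop (nhds y) := by
      have : (fun n => ψ^[n] y) = fun _ => y := by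
        funext n; exact Function.iterate_fixed hy n
      rw [this]; exact tendsto_const_nhds
    exact limeq y x0 y xs hconst hxs
end

section
/- Let (X, ρ) be a metric space, let ψ : X → X satisfy ρ(ψ²x, ψ²y) ≤ α(ρ(x, ψy) + ρ(y, ψx)) for all x, y ∈ X for some α ∈ (0, 1/2), fix x₀ ∈ X, set xₙ = ψⁿx₀ and ρₙ = ρ(xₙ, xₙ₊₁). Then for all n ≥ 2, ρₙ ≤ α(ρₙ₋₂ + ρₙ₋₁); consequently the series Σₙ ρₙ converges and the sequence (xₙ) is Cauchy in (X, ρ). -/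
/-- Inequality (2.2) and its consequences: for a 2-Chatterjea contraction (with
`α ∈ (0, 1/2)`) and `ρₙ = ρ(ψⁿ x₀, ψⁿ⁺¹ x₀)`, one has `ρₙ ≤ α (ρₙ₋₂ + ρₙ₋₁)` for `n ≥ 2`;
consequently `Σ ρₙ` converges and `(ψⁿ x₀)` is a Cauchy sequence. -/
theorem stmt_4 {X : Type*} [MetricSpace X]
    (ψ : X → X) (α : ℝ) (hα0 : 0 < α) (hα : α < 1 / 2)
    (hcontr : ∀ x y : X, dist (ψ (ψ x)) (ψ (ψ y)) ≤ α * (dist x (ψ y) + dist y (ψ x)))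
    (x₀ : X) :
    (∀ n : ℕ, 2 ≤ n →
        dist (ψ^[n] x₀) (ψ^[n + 1] x₀) ≤
          α * (dist (ψ^[n - 2] x₀) (ψ^[n - 1] x₀) + dist (ψ^[n - 1] x₀) (ψ^[n] x₀))) ∧
      Summable (fun n : ℕ => dist (ψ^[n] x₀) (ψ^[n + 1] x₀)) ∧
      CauchySeq (fun n : ℕ => ψ^[n] x₀) := by
  set d : ℕ → ℝ := fun n => dist (ψ^[n] x₀) (ψ^[n + 1] x₀) with hd
  have hdnn : ∀ n, 0 ≤ d n := fun n => dist_nonneg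
  have h1 : ∀ n : ℕ, d (n + 2) ≤ α * (d n + d (n + 1)) := by
    intro n
    have h := hcontr (ψ^[n] x₀) (ψ^[n + 1] x₀)
    have e1 : ψ (ψ^[n] x₀) = ψ^[n + 1] x₀ := (Function.iterate_succ_apply' ψ n x₀).symm
    have e2 : ψ (ψ^[n + 1] x₀) = ψ^[n + 2] x₀ :=
      (Function.iterate_succ_apply' ψ (n + 1) x₀).symm
    have e3 : ψ (ψ^[n + 2] x₀) = ψ^[n + 3] x₀ :=
      (Function.iterate_succ_apply' ψ (n + 2) x₀).symm
    rw [e1, e2, e3, dist_self] at h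
    have htri : dist (ψ^[n] x₀) (ψ^[n + 2] x₀) ≤ d n + d (n + 1) :=
      dist_triangle _ (ψ^[n + 1] x₀) _
    have : d (n + 2) ≤ α * (dist (ψ^[n] x₀) (ψ^[n + 2] x₀) + 0) := h
    nlinarith [hdnn n, hdnn (n + 1)]
  have hsum : Summable d := by
    set s : ℝ := Real.sqrt (α ^ 2 + 4 * α) with hs
    have hs0 : 0 ≤ s := Real.sqrt_nonneg _
    have hs2 : s ^ 2 = α ^ 2 + 4 * α := Real.sq_sqrt (by nlinarith)
    set q : ℝ := (α + s) / 2 with hq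
    have hq0 : 0 < q := by
      have : α ≤ α + s := by linarith
      positivity
    have hq1 : q < 1 := by
      have h2 : s < 2 - α := by
        nlinarith [Real.sqrt_nonneg (α ^ 2 + 4 * α)]
      rw [hq]; linarith
    have hqeq : q ^ 2 = α * (1 + q) := by
      rw [hq]; ring_nf; nlinarith
    set C : ℝ := max (d 0) (d 1 / q) with hC
    have hC0 : 0 ≤ C := le_trans (hdnn 0) (le_max_left _ _)
    have key : ∀ n, d n ≤ C * q ^ n := by
      intro n
      induction n using Nat.strong_induction_on with
      | _ n ih =>
        match n with
        | 0 => rw [pow_zero, mul_one]; exact le_max_left _ _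
        | 1 =>
          have : d 1 / q ≤ C := le_max_right _ _
          calc d 1 = d 1 / q * q := by field_simp
            _ ≤ C * q := by nlinarith
            _ = C * q ^ 1 := by ring
        | (m + 2) =>
          have ih1 := ih m (by omega)
          have ih2 := ih (m + 1) (by omega)
          calc d (m + 2) ≤ α * (d m + d (m + 1)) := h1 m
            _ ≤ α * (C * q ^ m + C * q ^ (m + 1)) := by nlinarith
            _ = C * q ^ m * (α * (1 + q)) := by ring
            _ = C * q ^ m * q ^ 2 := by rw [hqeq]
            _ = C * q ^ (m + 2) := by ring
    have hgeo : Summable (fun n : ℕ => C * q ^ n) :=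
      (summable_geometric_of_lt_one hq0.le hq1).mul_left C
    exact hgeo.of_nonneg_of_le hdnn key
  refine ⟨?_, hsum, cauchySeq_of_summable_dist hsum⟩
  intro n hn
  obtain ⟨k, rfl⟩ : ∃ k, n = k + 2 := ⟨n - 2, by omega⟩
  have e : k + 2 - 2 = k := by omega
  rw [e]
  have e' : k + 2 - 1 = k + 1 := by omega
  rw [e']
  exact h1 k
end

section
/- Let (X, ρ) be a complete metric space, let m ∈ ℕ with m ≥ 3, and let ψ : X → X be a mapping that is k-continuous for some k ∈ ℕ (i.e. ψ^k is continuous) and satisfies ρ(ψ^m x, ψ^m y) ≤ α(ρ(x, ψy) + ρ(y, ψx)) for all x, y ∈ X, for some constant α ∈ [0, 1/2). Then ψ has a unique fixed point x* in X, and for every initial point x₀ ∈ X the iterative sequence (ψⁿx₀) converges to x*. -/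
open Filter

/-- Step estimate along an orbit. -/
lemma stmt_11_step {X : Type*} [MetricSpace X]
    (m : ℕ) (ψ : X → X) (α : ℝ) (hα0 : 0 ≤ α)
    (hcontr : ∀ x y : X, dist (ψ^[m] x) (ψ^[m] y) ≤ α * (dist x (ψ y) + dist y (ψ x)))
    (x : X) :
    dist (ψ^[m] x) (ψ^[m] (ψ x)) ≤
      (2 * α) * max (dist x (ψ x)) (dist (ψ x) (ψ (ψ x))) := by
  have h := hcontr x (ψ x)
  have h2 : dist x (ψ (ψ x)) ≤ dist x (ψ x) + dist (ψ x) (ψ (ψ x)) := dist_triangle _ _ _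
  have h3 : dist x (ψ x) ≤ max (dist x (ψ x)) (dist (ψ x) (ψ (ψ x))) := le_max_left _ _
  have h4 : dist (ψ x) (ψ (ψ x)) ≤ max (dist x (ψ x)) (dist (ψ x) (ψ (ψ x))) := le_max_right _ _
  simp only [dist_self] at h
  nlinarith [h]

/-- **Theorem 3.3.** If `(X, ρ)` is a complete metric space, `m ≥ 3`, and `ψ : X → X` is
`k`-continuous for some `k ∈ ℕ` and satisfies `ρ(ψ^m x, ψ^m y) ≤ α (ρ(x, ψy) + ρ(y, ψx))`
for all `x, y ∈ X` with `α ∈ [0, 1/2)`, then `ψ` has a unique fixed point and every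
iterative sequence `(ψⁿ x₀)` converges to it. -/
theorem stmt_11 {X : Type*} [MetricSpace X] [CompleteSpace X] [Nonempty X]
    (m : ℕ) (hm : 3 ≤ m)
    (ψ : X → X) (k : ℕ) (hk : 1 ≤ k) (hψk : Continuous (ψ^[k]))
    (α : ℝ) (hα0 : 0 ≤ α) (hα : α < 1 / 2)
    (hcontr : ∀ x y : X, dist (ψ^[m] x) (ψ^[m] y) ≤ α * (dist x (ψ y) + dist y (ψ x))) :
    ∃ xs : X, ψ xs = xs ∧ (∀ y : X, ψ y = y → y = xs) ∧
      ∀ x₀ : X, Filter.Tendsto (fun n => ψ^[n] x₀) Filter.atTop (nhds xs) := by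
  set β : ℝ := max (2 * α) (1 / 2) with hβdef
  have hβ0 : 0 < β := lt_of_lt_of_le (by norm_num) (le_max_right _ _)
  have hβ1 : β < 1 := by
    apply max_lt <;> nlinarith
  have hβα : 2 * α ≤ β := le_max_left _ _
  have hm0 : 0 < m := by omega
  -- step lemma along orbits, in terms of β
  have step : ∀ (x : X) (n : ℕ),
      dist (ψ^[n + m] x) (ψ^[n + m + 1] x) ≤
        β * max (dist (ψ^[n] x) (ψ^[n + 1] x)) (dist (ψ^[n + 1] x) (ψ^[n + 2] x)) := by
    intro x n
    have h := stmt_11_step m ψ α hα0 hcontr (ψ^[n] x)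
    have e1 : ψ^[m] (ψ^[n] x) = ψ^[n + m] x := by
      rw [← Function.iterate_add_apply]; ring_nf
    have e2 : ψ (ψ^[n] x) = ψ^[n + 1] x := (Function.iterate_succ_apply' ψ n x).symm
    have e3 : ψ^[m] (ψ^[n + 1] x) = ψ^[n + m + 1] x := by
      rw [← Function.iterate_add_apply]; ring_nf
    have e4 : ψ (ψ^[n + 1] x) = ψ^[n + 2] x := (Function.iterate_succ_apply' ψ (n + 1) x).symm
    rw [e2] at h
    rw [e1, e3, e4] at h
    have hmax : (0:ℝ) ≤ max (dist (ψ^[n] x) (ψ^[n + 1] x)) (dist (ψ^[n + 1] x) (ψ^[n + 2] x)) :=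
      le_trans dist_nonneg (le_max_left _ _)
    nlinarith [h]
  -- geometric rate
  set r : ℝ := β ^ ((m : ℝ)⁻¹) with hrdef
  have hr0 : 0 < r := Real.rpow_pos_of_pos hβ0 _
  have hr1 : r < 1 := Real.rpow_lt_one hβ0.le hβ1 (by positivity)
  have hrm : r ^ m = β := by
    rw [hrdef, ← Real.rpow_natCast (β ^ ((m:ℝ)⁻¹)) m, ← Real.rpow_mul hβ0.le]
    rw [inv_mul_cancel₀ (by exact_mod_cast hm0.ne')]
    exact Real.rpow_one β
  -- each orbit is Cauchy and converges to a fixed point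
  have key : ∀ x₀ : X, ∃ z : X, ψ z = z ∧
      Tendsto (fun n => ψ^[n] x₀) atTop (nhds z) := by
    intro x₀
    set d : ℕ → ℝ := fun n => dist (ψ^[n] x₀) (ψ^[n + 1] x₀) with hd
    have hd0 : ∀ n, 0 ≤ d n := fun n => dist_nonneg
    set D : ℝ := ∑ i ∈ Finset.range m, d i with hD
    have hD0 : 0 ≤ D := Finset.sum_nonneg fun i _ => hd0 i
    have hDle : ∀ i < m, d i ≤ D := by
      intro i hi
      exact Finset.single_le_sum (fun j _ => hd0 j) (Finset.mem_range.mpr hi)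
    -- decay : d n ≤ D * β ^ (n / m)
    have decay : ∀ n, d n ≤ D * β ^ (n / m) := by
      intro n
      induction n using Nat.strong_induction_on with
      | _ n ih =>
        by_cases hn : n < m
        · rw [Nat.div_eq_of_lt hn]
          simpa using hDle n hn
        · push_neg at hn
          obtain ⟨p, rfl⟩ : ∃ p, n = p + m := ⟨n - m, by omega⟩
          have h1 : d (p + m) ≤ β * max (d p) (d (p + 1)) := step x₀ p
          have ih1 := ih p (by omega)
          have ih2 := ih (p + 1) (by omega)
          have hmono : β ^ ((p + 1) / m) ≤ β ^ (p / m) :=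
            pow_le_pow_of_le_one hβ0.le hβ1.le (Nat.div_le_div_right (by omega))
          have hdiv : (p + m) / m = p / m + 1 := Nat.add_div_right p hm0
          have hmax : max (d p) (d (p + 1)) ≤ D * β ^ (p / m) := by
            apply max_le ih1 (le_trans ih2 ?_)
            exact mul_le_mul_of_nonneg_left hmono hD0
          calc d (p + m) ≤ β * max (d p) (d (p + 1)) := h1
            _ ≤ β * (D * β ^ (p / m)) :=
                mul_le_mul_of_nonneg_left hmax hβ0.le
            _ = D * β ^ (p / m + 1) := by ring
            _ = D * β ^ ((p + m) / m) := by rw [hdiv]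
    -- geometric bound
    have hgeo : ∀ n, d n ≤ (D / r ^ (m - 1)) * r ^ n := by
      intro n
      have hle : n ≤ m * (n / m) + (m - 1) := by
        have h2 := Nat.div_add_mod n m
        have h3 := Nat.mod_lt n hm0
        omega
      have hpow : r ^ (m * (n / m) + (m - 1)) ≤ r ^ n :=
        pow_le_pow_of_le_one hr0.le hr1.le hle
      have heq : r ^ (m * (n / m) + (m - 1)) = β ^ (n / m) * r ^ (m - 1) := by
        rw [pow_add, pow_mul, hrm]
      have : β ^ (n / m) * r ^ (m - 1) ≤ r ^ n := heq ▸ hpow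
      have hr' : (0:ℝ) < r ^ (m - 1) := pow_pos hr0 _
      calc d n ≤ D * β ^ (n / m) := decay n
        _ ≤ D * (r ^ n / r ^ (m - 1)) := by
            apply mul_le_mul_of_nonneg_left _ hD0
            rw [le_div_iff₀ hr']
            exact this
        _ = (D / r ^ (m - 1)) * r ^ n := by ring
    have hcauchy : CauchySeq (fun n => ψ^[n] x₀) :=
      cauchySeq_of_le_geometric r (D / r ^ (m - 1)) hr1 fun n => hgeo n
    obtain ⟨z, hz⟩ := cauchySeq_tendsto_of_complete hcauchy
    -- z is fixed by ψ^[k]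
    have hzk : ψ^[k] z = z := by
      have h1 : Tendsto (fun n => ψ^[k] (ψ^[n] x₀)) atTop (nhds (ψ^[k] z)) :=
        (hψk.tendsto z).comp hz
      have h2 : Tendsto (fun n => ψ^[k] (ψ^[n] x₀)) atTop (nhds z) := by
        have : (fun n => ψ^[k] (ψ^[n] x₀)) = fun n => ψ^[n + k] x₀ := by
          funext n; rw [← Function.iterate_add_apply, Nat.add_comm]
        rw [this]
        exact hz.comp (tendsto_add_atTop_nat k)
      exact tendsto_nhds_unique h1 h2
    -- z is fixed by ψ
    have hzfix : ψ z = z := by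
      set a : ℕ → ℝ := fun n => dist (ψ^[n] z) (ψ^[n + 1] z) with ha
      have haper : ∀ j n, a (n + j * k) = a n := by
        intro j
        induction j with
        | zero => simp
        | succ j ih =>
          intro n
          have e : ∀ p : ℕ, ψ^[p + k] z = ψ^[p] z := by
            intro p
            rw [Function.iterate_add_apply, hzk]
          have : n + (j + 1) * k = (n + j * k) + k := by ring
          rw [this, ha]
          simp only
          have h1 : n + j * k + k + 1 = (n + j * k + 1) + k := by ring
          rw [e (n + j * k), h1, e (n + j * k + 1)]
          exact ih n
      obtain ⟨k', rfl⟩ : ∃ k', k = k' + 1 := ⟨k - 1, by omega⟩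
      set A : ℝ := ((Finset.range (k' + 1)).image a).max'
        (by simp) with hA
      have hallA : ∀ n, a n ≤ A := by
        intro n
        have h1 : a n = a (n % (k' + 1)) := by
          conv_lhs => rw [← Nat.mod_add_div n (k' + 1)]
          rw [mul_comm]
          exact haper _ _
        rw [h1]
        apply Finset.le_max'
        exact Finset.mem_image_of_mem a (Finset.mem_range.mpr (Nat.mod_lt n (by omega)))
      have hstepA : ∀ n, a (n + m) ≤ β * A := by
        intro n
        have h := step z n
        have : max (a n) (a (n + 1)) ≤ A := max_le (hallA n) (hallA (n + 1))
        calc a (n + m) ≤ β * max (a n) (a (n + 1)) := h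
          _ ≤ β * A := mul_le_mul_of_nonneg_left this hβ0.le
      have hAmem : ∃ i, A = a i := by
        obtain ⟨i, _, hi⟩ := Finset.mem_image.mp
          (((Finset.range (k' + 1)).image a).max'_mem (by simp))
        exact ⟨i, hi.symm⟩
      obtain ⟨i, hi⟩ := hAmem
      have hAle : A ≤ β * A := by
        have h1 : a i = a (i + m * (k' + 1)) := (haper m i).symm
        have h2 : i + m * (k' + 1) = (i + m * k') + m := by ring
        calc A = a i := hi
          _ = a ((i + m * k') + m) := by rw [← h2, h1]
          _ ≤ β * A := hstepA _
      have hA0 : 0 ≤ A := le_trans dist_nonneg (hallA 0)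
      have hAzero : A ≤ 0 := by nlinarith
      have : a 0 = 0 := le_antisymm (le_trans (hallA 0) hAzero) dist_nonneg
      have : dist z (ψ z) = 0 := by simpa [ha] using this
      exact (dist_eq_zero.mp this).symm
    exact ⟨z, hzfix, hz⟩
  -- uniqueness of fixed points
  have uniq : ∀ y z : X, ψ y = y → ψ z = z → y = z := by
    intro y z hy hz
    have hym : ψ^[m] y = y := Function.iterate_fixed hy m
    have hzm : ψ^[m] z = z := Function.iterate_fixed hz m
    have h := hcontr y z
    rw [hym, hzm, hy, hz, dist_comm z y] at h
    have : dist y z = 0 := by nlinarith [dist_nonneg (x := y) (y := z)]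
    exact dist_eq_zero.mp this
  obtain ⟨xs, hfix, htend⟩ := key (Classical.arbitrary X)
  refine ⟨xs, hfix, fun y hy => uniq y xs hy hfix, fun x₀ => ?_⟩
  obtain ⟨z, hzfix, hztend⟩ := key x₀
  rwa [uniq z xs hzfix hfix] at hztend
end

section
/- Let (X, ρ) be a metric space, let m ∈ ℕ with m ≥ 3, let ψ : X → X satisfy ρ(ψ^m x, ψ^m y) ≤ α(ρ(x, ψy) + ρ(y, ψx)) for all x, y ∈ X for some α ∈ [0, 1/2), and for x ∈ X set a(x) = Σ_{i=0}^{m−1} ρ(ψ^i x, ψ^{i+1} x). Then for every n ∈ ℕ with n ≥ 1 and every l ∈ {0, 1, …, m−1}, one has ρ(ψ^{nm+l} x, ψ^{nm+l+1} x) ≤ 2^{n−1} α^n a(x). -/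
/-- Abstract recursion lemma: if `d` is a nonnegative sequence with
`d (k+m) ≤ α (d k + d (k+1))` for all `k`, then for `n ≥ 1` and `l ≤ m-1`
we have `d (nm+l) ≤ 2^{n-1} α^n a` where `a = Σ_{i<m} d i`. -/
theorem stmt_12_aux (m : ℕ) (hm : 3 ≤ m) (α : ℝ) (hα0 : 0 ≤ α) (hα : α < 1 / 2)
    (d : ℕ → ℝ) (hd0 : ∀ k, 0 ≤ d k)
    (key : ∀ k, d (k + m) ≤ α * (d k + d (k + 1))) :
    ∀ n, 1 ≤ n → ∀ l, l ≤ m - 1 →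
      d (n * m + l) ≤ 2 ^ (n - 1) * α ^ n * ∑ i ∈ Finset.range m, d i := by
  set a : ℝ := ∑ i ∈ Finset.range m, d i with ha_def
  have ha0 : 0 ≤ a := Finset.sum_nonneg fun i _ => hd0 i
  have pair_le : ∀ i j : ℕ, i < m → j < m → i ≠ j → d i + d j ≤ a := by
    intro i j hi hj hij
    have hsub : ({i, j} : Finset ℕ) ⊆ Finset.range m := by
      intro k hk
      simp only [Finset.mem_insert, Finset.mem_singleton] at hk
      rcases hk with rfl | rfl <;> simpa [Finset.mem_range]
    calc d i + d j = ∑ k ∈ ({i, j} : Finset ℕ), d k := (Finset.sum_pair hij).symm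
      _ ≤ a := Finset.sum_le_sum_of_subset_of_nonneg hsub fun k _ _ => hd0 k
  have triple_le : d 0 + d 1 + d (m - 1) ≤ a := by
    have hsub : ({0, 1, m - 1} : Finset ℕ) ⊆ Finset.range m := by
      intro k hk
      simp only [Finset.mem_insert, Finset.mem_singleton] at hk
      rcases hk with rfl | rfl | rfl <;> simp [Finset.mem_range] <;> omega
    have hsum : ∑ k ∈ ({0, 1, m - 1} : Finset ℕ), d k = d 0 + d 1 + d (m - 1) := by
      rw [Finset.sum_insert (by simp; omega), Finset.sum_insert (by simp; omega),
        Finset.sum_singleton]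
      ring
    calc d 0 + d 1 + d (m - 1) = ∑ k ∈ ({0, 1, m - 1} : Finset ℕ), d k := hsum.symm
      _ ≤ a := Finset.sum_le_sum_of_subset_of_nonneg hsub fun k _ _ => hd0 k
  intro n hn
  induction n, hn using Nat.le_induction with
  | base =>
    intro l hl
    have hle : d l + d (l + 1) ≤ a := by
      rcases Nat.lt_or_ge (l + 1) m with h | h
      · exact pair_le l (l + 1) (by omega) h (by omega)
      · have hlm : l + 1 = m := by omega
        have hl' : l = m - 1 := by omega
        have hdm : d (l + 1) ≤ α * (d 0 + d 1) := by
          have h0 := key 0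
          rw [Nat.zero_add] at h0
          rw [hlm]
          simpa using h0
        have hdm' : d (l + 1) ≤ d 0 + d 1 := by nlinarith [hd0 0, hd0 1]
        rw [hlm] at hdm'
        rw [hl', show m - 1 + 1 = m from by omega]
        linarith
    have hk : d (1 * m + l) ≤ α * (d l + d (l + 1)) := by
      have he : 1 * m + l = l + m := by ring
      rw [he]; exact key l
    calc d (1 * m + l) ≤ α * (d l + d (l + 1)) := hk
      _ ≤ α * a := mul_le_mul_of_nonneg_left hle hα0
      _ = 2 ^ (1 - 1) * α ^ 1 * a := by norm_num
  | succ n hn ih =>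
    intro l hl
    have h2 : (2 : ℝ) ^ n = 2 * 2 ^ (n - 1) := by
      rw [← pow_succ']
      congr 1
      omega
    have hb0 : d (n * m) ≤ 2 ^ (n - 1) * α ^ n * a := by
      simpa using ih 0 (by omega)
    have hb1 : d (n * m + 1) ≤ 2 ^ (n - 1) * α ^ n * a := ih 1 (by omega)
    have hnext : d ((n + 1) * m) ≤ 2 ^ n * α ^ (n + 1) * a := by
      have hk := key (n * m)
      have he : n * m + m = (n + 1) * m := by ring
      rw [he] at hk
      calc d ((n + 1) * m) ≤ α * (d (n * m) + d (n * m + 1)) := hk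
        _ ≤ α * (2 ^ (n - 1) * α ^ n * a + 2 ^ (n - 1) * α ^ n * a) :=
            mul_le_mul_of_nonneg_left (add_le_add hb0 hb1) hα0
        _ = 2 ^ n * α ^ (n + 1) * a := by rw [h2]; ring
    have hk := key (n * m + l)
    have he : n * m + l + m = (n + 1) * m + l := by ring
    rw [he] at hk
    have hgoal : d ((n + 1) * m + l) ≤ 2 ^ n * α ^ (n + 1) * a := by
      rcases Nat.lt_or_ge (l + 1) m with h | h
      · have hbl : d (n * m + l) ≤ 2 ^ (n - 1) * α ^ n * a := ih l (by omega)
        have hbl1 : d (n * m + l + 1) ≤ 2 ^ (n - 1) * α ^ n * a := by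
          have := ih (l + 1) (by omega)
          rw [← Nat.add_assoc] at this
          exact this
        calc d ((n + 1) * m + l) ≤ α * (d (n * m + l) + d (n * m + l + 1)) := hk
          _ ≤ α * (2 ^ (n - 1) * α ^ n * a + 2 ^ (n - 1) * α ^ n * a) :=
              mul_le_mul_of_nonneg_left (add_le_add hbl hbl1) hα0
          _ = 2 ^ n * α ^ (n + 1) * a := by rw [h2]; ring
      · have hlm : l + 1 = m := by omega
        have hbl : d (n * m + l) ≤ 2 ^ (n - 1) * α ^ n * a := ih l (by omega)
        have hbl1 : d (n * m + l + 1) ≤ 2 ^ n * α ^ (n + 1) * a := by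
          have he2 : n * m + l + 1 = (n + 1) * m := by omega
          rw [he2]; exact hnext
        have hc : (0 : ℝ) ≤ 2 ^ (n - 1) * α ^ n * a := by positivity
        calc d ((n + 1) * m + l) ≤ α * (d (n * m + l) + d (n * m + l + 1)) := hk
          _ ≤ α * (2 ^ (n - 1) * α ^ n * a + 2 ^ n * α ^ (n + 1) * a) :=
              mul_le_mul_of_nonneg_left (add_le_add hbl hbl1) hα0
          _ ≤ 2 ^ n * α ^ (n + 1) * a := by
              have ht : 0 ≤ (1 - 2 * α) * (α * (2 ^ (n - 1) * α ^ n * a)) :=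
                mul_nonneg (by linarith) (mul_nonneg hα0 hc)
              rw [h2, pow_succ]
              nlinarith [ht]
    have hee : n + 1 - 1 = n := by omega
    rw [hee]
    exact hgoal

/-- Inequality (3.2): for an `m`-Chatterjea contraction (`m ≥ 3`) with
`a(x) = Σ_{i=0}^{m-1} ρ(ψ^i x, ψ^{i+1} x)`, one has
`ρ(ψ^{nm+l} x, ψ^{nm+l+1} x) ≤ 2^{n-1} α^n a(x)` for all `n ≥ 1` and `l ∈ {0,…,m-1}`. -/
theorem stmt_12 {X : Type*} [MetricSpace X]
    (m : ℕ) (hm : 3 ≤ m)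
    (ψ : X → X) (α : ℝ) (hα0 : 0 ≤ α) (hα : α < 1 / 2)
    (hcontr : ∀ x y : X, dist (ψ^[m] x) (ψ^[m] y) ≤ α * (dist x (ψ y) + dist y (ψ x)))
    (x : X) (n : ℕ) (hn : 1 ≤ n) (l : ℕ) (hl : l ≤ m - 1) :
    dist (ψ^[n * m + l] x) (ψ^[n * m + l + 1] x) ≤
      2 ^ (n - 1) * α ^ n * ∑ i ∈ Finset.range m, dist (ψ^[i] x) (ψ^[i + 1] x) := by
  have key : ∀ k, dist (ψ^[k + m] x) (ψ^[k + m + 1] x)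
      ≤ α * (dist (ψ^[k] x) (ψ^[k + 1] x) + dist (ψ^[k + 1] x) (ψ^[k + 1 + 1] x)) := by
    intro k
    have h1 : ψ^[k + m] x = ψ^[m] (ψ^[k] x) := by
      rw [Nat.add_comm, Function.iterate_add_apply]
    have h2 : ψ^[k + m + 1] x = ψ^[m] (ψ^[k + 1] x) := by
      have : k + m + 1 = (k + 1) + m := by omega
      rw [this, Nat.add_comm, Function.iterate_add_apply]
    rw [h1, h2]
    have e1 : ψ (ψ^[k + 1] x) = ψ^[k + 1 + 1] x := (Function.iterate_succ_apply' ψ (k + 1) x).symm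
    have e2 : ψ (ψ^[k] x) = ψ^[k + 1] x := (Function.iterate_succ_apply' ψ k x).symm
    have hc := hcontr (ψ^[k] x) (ψ^[k + 1] x)
    rw [e1, e2, dist_self] at hc
    have htri := dist_triangle (ψ^[k] x) (ψ^[k + 1] x) (ψ^[k + 1 + 1] x)
    nlinarith [dist_nonneg (x := ψ^[k] x) (y := ψ^[k + 1] x),
      dist_nonneg (x := ψ^[k + 1] x) (y := ψ^[k + 1 + 1] x)]
  exact stmt_12_aux m hm α hα0 hα (fun k => dist (ψ^[k] x) (ψ^[k + 1] x))
    (fun k => dist_nonneg) key n hn l hl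
end

section
/- Let X = [0,1] with the Euclidean metric and define ψ : X → X by ψ0 = 1/8 and ψx = x/8 for x ∈ (0,1]. Then: (i) ψ has no fixed point in [0,1]; (ii) for every x ∈ [0,1] the iterative sequence (ψⁿx) converges to 0; and (iii) for every k ∈ ℕ the iterate ψ^k is discontinuous at 0, so ψ is not k-continuous for any k. -/
private lemma iter_ne_zero (ψ : ℝ → ℝ)
    (hψ : ∀ x : ℝ, ψ x = if x = 0 then 1 / 8 else x / 8) :
    ∀ (n : ℕ) (x : ℝ), x ≠ 0 → ψ^[n] x = x / 8 ^ n := by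
  intro n
  induction n with
  | zero => intro x hx; simp
  | succ n ih =>
    intro x hx
    rw [Function.iterate_succ_apply]
    have hψx : ψ x = x / 8 := by rw [hψ]; simp [hx]
    rw [hψx, ih _ (by positivity)]
    rw [pow_succ]
    ring

/-- **Example 3.6 (part 2) / Example 3.8.** The mapping `ψ` on `[0,1]` with `ψ0 = 1/8`
and `ψx = x/8` for `x ∈ (0,1]` has no fixed point, all its iterative sequences converge
to `0`, and every iterate `ψ^k` (`k ≥ 1`) is discontinuous at `0`, so `ψ` is not
`k`-continuous for any `k`. -/
theorem stmt_16 (ψ : ℝ → ℝ)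
    (hψ : ∀ x : ℝ, ψ x = if x = 0 then 1 / 8 else x / 8) :
    (∀ x ∈ Set.Icc (0 : ℝ) 1, ψ x ≠ x) ∧
      (∀ x ∈ Set.Icc (0 : ℝ) 1,
        Filter.Tendsto (fun n => ψ^[n] x) Filter.atTop (nhds 0)) ∧
      (∀ k : ℕ, 1 ≤ k → ¬ ContinuousWithinAt (ψ^[k]) (Set.Icc (0 : ℝ) 1) 0) := by
  have h8 : |(1:ℝ)/8| < 1 := by rw [abs_of_pos] <;> norm_num
  have hdiv : ∀ c : ℝ, Filter.Tendsto (fun n : ℕ => c / 8 ^ n) Filter.atTop (nhds 0) := by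
    intro c
    have := tendsto_pow_atTop_nhds_zero_of_abs_lt_one h8
    have := this.const_mul c
    simpa [div_eq_mul_inv, mul_comm, one_div, inv_pow] using this
  refine ⟨?_, ?_, ?_⟩
  · intro x hx h
    rw [hψ] at h
    by_cases hx0 : x = 0
    · simp [hx0] at h
    · simp [hx0] at h
      have : x * 7 = 0 := by linarith [h]
      exact hx0 (by linarith)
  · intro x hx
    by_cases hx0 : x = 0
    · subst hx0
      rw [← Filter.tendsto_add_atTop_iff_nat 1]
      have : ∀ n : ℕ, ψ^[n + 1] (0:ℝ) = (1/8) / 8 ^ n := by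
        intro n
        rw [Function.iterate_succ_apply, hψ]
        simp only [if_pos rfl]
        exact iter_ne_zero ψ hψ n _ (by norm_num)
      simpa [this] using hdiv (1/8)
    · have : ∀ n : ℕ, ψ^[n] x = x / 8 ^ n := fun n => iter_ne_zero ψ hψ n x hx0
      simpa [this] using hdiv x
  · intro k hk h
    have hne : (nhdsWithin (0:ℝ) (Set.Ioc 0 1)).NeBot := by
      apply mem_closure_iff_nhdsWithin_neBot.mp
      rw [closure_Ioc (by norm_num : (0:ℝ) ≠ 1)]
      exact ⟨le_refl 0, by norm_num⟩
    have h1 : Filter.Tendsto (ψ^[k]) (nhdsWithin (0:ℝ) (Set.Ioc 0 1)) (nhds (ψ^[k] 0)) :=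
      h.tendsto.mono_left (nhdsWithin_mono 0 Set.Ioc_subset_Icc_self)
    have h2 : Filter.Tendsto (ψ^[k]) (nhdsWithin (0:ℝ) (Set.Ioc 0 1)) (nhds 0) := by
      have heq : ∀ x ∈ Set.Ioc (0:ℝ) 1, ψ^[k] x = x / 8 ^ k := fun x hx =>
        iter_ne_zero ψ hψ k x (ne_of_gt hx.1)
      have : Filter.Tendsto (fun x : ℝ => x / 8 ^ k) (nhdsWithin (0:ℝ) (Set.Ioc 0 1))
          (nhds 0) := by
        have : Filter.Tendsto (fun x : ℝ => x / 8 ^ k) (nhds 0) (nhds 0) := by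
          simpa using (continuous_id.div_const ((8:ℝ)^k)).tendsto 0
        exact this.mono_left nhdsWithin_le_nhds
      exact this.congr' (by filter_upwards [self_mem_nhdsWithin] with x hx using (heq x hx).symm)
    have hval : ψ^[k] 0 = (1/8) / 8 ^ (k - 1) := by
      obtain ⟨m, rfl⟩ := Nat.exists_eq_add_of_le hk
      rw [add_comm, Function.iterate_succ_apply, hψ]
      simp only [if_pos rfl]
      rw [iter_ne_zero ψ hψ m _ (by norm_num)]
      congr 1
    have := tendsto_nhds_unique h1 h2
    rw [hval] at this
    have : (0:ℝ) < (1/8) / 8 ^ (k-1) := by positivity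
    linarith [tendsto_nhds_unique h1 h2, hval]
end

section
/- Let (X, ρ) be a complete metric space and let ψ : X → X satisfy ρ(ψ³x, ψ³y) ≤ α(ρ(x, ψy) + ρ(y, ψx)) for all x, y ∈ X, for some α ∈ [0, 1/2). Let x* ∈ X be the common limit of the iterative sequences (ψⁿx), x ∈ X. If ψ has no fixed point in X, then ψ is discontinuous at x*. -/
/-- **Corollary 3.7.** If a 3-Chatterjea contraction `ψ` on a complete metric space has
no fixed point, then `ψ` is discontinuous at the unique common limit `x*` of all
iterative sequences `(ψⁿ x)`. -/
theorem stmt_17 {X : Type*} [MetricSpace X] [CompleteSpace X]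
    (ψ : X → X) (α : ℝ) (hα0 : 0 ≤ α) (hα : α < 1 / 2)
    (hcontr : ∀ x y : X,
      dist (ψ^[3] x) (ψ^[3] y) ≤ α * (dist x (ψ y) + dist y (ψ x)))
    (xs : X)
    (hxs : ∀ x : X, Filter.Tendsto (fun n => ψ^[n] x) Filter.atTop (nhds xs))
    (hnofix : ∀ y : X, ψ y ≠ y) :
    ¬ ContinuousAt ψ xs := by
  intro hc
  have h1 : Filter.Tendsto (fun n => ψ (ψ^[n] xs)) Filter.atTop (nhds (ψ xs)) :=
    hc.tendsto.comp (hxs xs)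
  have h2 : Filter.Tendsto (fun n => ψ (ψ^[n] xs)) Filter.atTop (nhds xs) := by
    have := (hxs xs).comp (Filter.tendsto_add_atTop_nat 1)
    simp only [Function.comp_def] at this
    simpa [Function.iterate_succ_apply'] using this
  exact hnofix xs (tendsto_nhds_unique h1 h2)
end

section
/- Let X = [0,1] with the Euclidean metric and define ψ : X → X by ψ0 = 0, ψ(1/4) = 0, ψ(1/2) = 1/4, and ψx = 1/2 for all other x ∈ [0,1]. Then: (i) ψ is discontinuous at x = 1/2; (ii) ψ³ is the constant map 0, hence ψ is 3-continuous; (iii) ψ satisfies |ψ³x − ψ³y| ≤ (1/3)(|x − ψy| + |y − ψx|) for all x, y ∈ [0,1], i.e. ψ is a 3-Chatterjea contraction with α = 1/3; and (iv) 0 is the unique fixed point of ψ. -/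
open Filter Topology

/-- **Example 3.9.** The mapping `ψ` on `[0,1]` with `ψ0 = 0`, `ψ(1/4) = 0`,
`ψ(1/2) = 1/4` and `ψx = 1/2` otherwise is discontinuous at `1/2`, its third iterate is
the constant map `0` (hence `ψ` is 3-continuous), it is a 3-Chatterjea contraction with
`α = 1/3`, and `0` is its unique fixed point. -/
theorem stmt_18 (ψ : ℝ → ℝ)
    (hψ : ∀ x : ℝ, ψ x =
      if x = 0 then 0 else if x = 1 / 4 then 0 else if x = 1 / 2 then 1 / 4 else 1 / 2) :
    (¬ ContinuousWithinAt ψ (Set.Icc (0 : ℝ) 1) (1 / 2)) ∧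
      (∀ x ∈ Set.Icc (0 : ℝ) 1, ψ^[3] x = 0) ∧
      ContinuousOn (ψ^[3]) (Set.Icc (0 : ℝ) 1) ∧
      (∀ x ∈ Set.Icc (0 : ℝ) 1, ∀ y ∈ Set.Icc (0 : ℝ) 1,
        |ψ^[3] x - ψ^[3] y| ≤ (1 / 3) * (|x - ψ y| + |y - ψ x|)) ∧
      ψ 0 = 0 ∧ (∀ y ∈ Set.Icc (0 : ℝ) 1, ψ y = y → y = 0) := by
  have h0 : ψ 0 = 0 := by rw [hψ]; norm_num
  have h4 : ψ (1/4) = 0 := by rw [hψ]; norm_num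
  have h2 : ψ (1/2) = 1/4 := by rw [hψ]; norm_num
  have h3 : ∀ x : ℝ, ψ^[3] x = 0 := by
    intro x
    show ψ (ψ (ψ x)) = 0
    rcases eq_or_ne x 0 with h | h
    · rw [h, h0, h0, h0]
    rcases eq_or_ne x (1/4) with hx4 | hx4
    · rw [hx4, h4, h0, h0]
    rcases eq_or_ne x (1/2) with hx2 | hx2
    · rw [hx2, h2, h4, h0]
    · have : ψ x = 1/2 := by rw [hψ, if_neg h, if_neg hx4, if_neg hx2]
      rw [this, h2, h4]
  refine ⟨?_, fun x _ => h3 x, ?_, ?_, h0, ?_⟩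
  · intro hc
    set u : ℕ → ℝ := fun n => 1/2 + 1/(n+3) with hu
    have hmem : ∀ n, u n ∈ Set.Icc (0:ℝ) 1 := by
      intro n
      have h1 : (0:ℝ) < 1/((n:ℝ)+3) := by positivity
      have h2' : 1/((n:ℝ)+3) ≤ 1/3 := by
        apply one_div_le_one_div_of_le <;> [norm_num; · push_cast; linarith [Nat.cast_nonneg (α := ℝ) n]]
      constructor <;> simp only [hu] <;> linarith
    have hlim : Tendsto u atTop (𝓝[Set.Icc (0:ℝ) 1] (1/2)) := by
      rw [tendsto_nhdsWithin_iff]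
      constructor
      · have ha : Tendsto (fun n : ℕ => ((n:ℝ)+3)) atTop atTop :=
          tendsto_atTop_add_const_right atTop (3:ℝ) tendsto_natCast_atTop_atTop
        have := ha.inv_tendsto_atTop.const_add (1/2 : ℝ)
        simpa [hu, one_div] using this
      · exact Eventually.of_forall hmem
    have hval : ∀ n, ψ (u n) = 1/2 := by
      intro n
      have h1 : (0:ℝ) < 1/((n:ℝ)+3) := by positivity
      have hne0 : u n ≠ 0 := by simp only [hu]; intro h; linarith
      have hne4 : u n ≠ 1/4 := by simp only [hu]; intro h; linarith
      have hne2 : u n ≠ 1/2 := by simp only [hu]; intro h; linarith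
      rw [hψ, if_neg hne0, if_neg hne4, if_neg hne2]
    have htend : Tendsto (fun n => ψ (u n)) atTop (𝓝 (ψ (1/2))) := hc.tendsto.comp hlim
    rw [h2] at htend
    have : Tendsto (fun _ : ℕ => (1/2 : ℝ)) atTop (𝓝 (1/4)) := by
      simp only [hval] at htend; exact htend
    have := tendsto_nhds_unique this tendsto_const_nhds
    norm_num at this
  · have : (ψ^[3]) = fun _ => (0:ℝ) := funext h3
    rw [this]; exact continuousOn_const
  · intro x _ y _
    rw [h3 x, h3 y]
    have : |x - ψ y| ≥ 0 := abs_nonneg _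
    have : |y - ψ x| ≥ 0 := abs_nonneg _
    simp only [sub_zero, abs_zero]
    positivity
  · intro y _ hy
    rcases eq_or_ne y 0 with h | h
    · exact h
    rcases eq_or_ne y (1/4) with hy4 | hy4
    · rw [hy4, h4] at hy; norm_num at hy
    rcases eq_or_ne y (1/2) with hy2 | hy2
    · rw [hy2, h2] at hy; norm_num at hy
    · rw [hψ, if_neg h, if_neg hy4, if_neg hy2] at hy
      exact absurd hy.symm hy2
end
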